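/- arXiv:1311.2486 — 5 statements merged into one kernel-verified Lean document; each statement's English description precedes it below -/
import Mathlib

section
/- Let ξ = (ξ₀,…,ξₙ) and η = (η₀,…,ηₘ) be finite strings in a type V with ξ₀ = η₀, and suppose for all pairs (i,j) the transition counts agree: N_{i,j}(ξ) = N_{i,j}(η), where N_{i,j}(ξ) = #{k : 0 ≤ k ≤ n−1, ξ_k = i, ξ_{k+1} = j}. Then n = m and the final states agree: ξₙ = ηₘ. -/
/-- Transition count `N i j` of a finite string `ξ : Fin (n+1) → V`. -/
def transCount {V : Type*} [DecidableEq V] {n : ℕ} (ξ : Fin (n + 1) → V) (i j : V) : ℕ :=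
  (Finset.univ.filter (fun k : Fin n => ξ k.castSucc = i ∧ ξ k.succ = j)).card

lemma outCount_eq_sum {V : Type*} [DecidableEq V] {n : ℕ} (ξ : Fin (n + 1) → V) (v : V)
    (S : Finset V) (hS : ∀ k : Fin n, ξ k.succ ∈ S) :
    (Finset.univ.filter (fun k : Fin n => ξ k.castSucc = v)).card
      = ∑ j ∈ S, transCount ξ v j := by
  rw [Finset.card_eq_sum_card_fiberwise (f := fun k : Fin n => ξ k.succ) (t := S)
    (fun k _ => hS k)]
  refine Finset.sum_congr rfl fun j _ => ?_
  simp [transCount, Finset.filter_filter]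

lemma inCount_eq_sum {V : Type*} [DecidableEq V] {n : ℕ} (ξ : Fin (n + 1) → V) (v : V)
    (S : Finset V) (hS : ∀ k : Fin n, ξ k.castSucc ∈ S) :
    (Finset.univ.filter (fun k : Fin n => ξ k.succ = v)).card
      = ∑ i ∈ S, transCount ξ i v := by
  rw [Finset.card_eq_sum_card_fiberwise (f := fun k : Fin n => ξ k.castSucc) (t := S)
    (fun k _ => hS k)]
  refine Finset.sum_congr rfl fun i _ => ?_
  simp [transCount, Finset.filter_filter, and_comm]

lemma len_eq_sum {V : Type*} [DecidableEq V] {n : ℕ} (ξ : Fin (n + 1) → V)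
    (S : Finset V) (hS : ∀ k : Fin n, ξ k.castSucc ∈ S) :
    n = ∑ v ∈ S, (Finset.univ.filter (fun k : Fin n => ξ k.castSucc = v)).card := by
  have := Finset.card_eq_sum_card_fiberwise (f := fun k : Fin n => ξ k.castSucc) (t := S)
    (s := Finset.univ) (fun k _ => hS k)
  simpa using this

lemma flow {V : Type*} [DecidableEq V] {n : ℕ} (ξ : Fin (n + 1) → V) (v : V) :
    (Finset.univ.filter (fun k : Fin n => ξ k.castSucc = v)).card
      + (if ξ (Fin.last n) = v then 1 else 0)
    = (if ξ 0 = v then 1 else 0)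
      + (Finset.univ.filter (fun k : Fin n => ξ k.succ = v)).card := by
  have h : ∀ (p : Fin n → Prop) [DecidablePred p],
      (Finset.univ.filter p).card = ∑ k : Fin n, (if p k then 1 else 0) := by
    intro p _; rw [Finset.card_filter]
  rw [h, h]
  have h1 := Fin.sum_univ_castSucc (fun k : Fin (n + 1) => if ξ k = v then 1 else 0)
  have h2 := Fin.sum_univ_succ (fun k : Fin (n + 1) => if ξ k = v then 1 else 0)
  omega

theorem stmt0 {V : Type*} [DecidableEq V] {n m : ℕ}
    (ξ : Fin (n + 1) → V) (η : Fin (m + 1) → V)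
    (hstart : ξ 0 = η 0)
    (hN : ∀ i j : V, transCount ξ i j = transCount η i j) :
    n = m ∧ ξ (Fin.last n) = η (Fin.last m) := by
  classical
  set S : Finset V := (Finset.univ.image ξ) ∪ (Finset.univ.image η) with hSdef
  have hξ : ∀ k : Fin (n + 1), ξ k ∈ S := fun k => by
    simp [hSdef]
  have hη : ∀ k : Fin (m + 1), η k ∈ S := fun k => by
    simp [hSdef]
  have hout : ∀ v : V,
      (Finset.univ.filter (fun k : Fin n => ξ k.castSucc = v)).card
        = (Finset.univ.filter (fun k : Fin m => η k.castSucc = v)).card := by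
    intro v
    rw [outCount_eq_sum ξ v S (fun k => hξ _), outCount_eq_sum η v S (fun k => hη _)]
    exact Finset.sum_congr rfl fun j _ => hN v j
  have hin : ∀ v : V,
      (Finset.univ.filter (fun k : Fin n => ξ k.succ = v)).card
        = (Finset.univ.filter (fun k : Fin m => η k.succ = v)).card := by
    intro v
    rw [inCount_eq_sum ξ v S (fun k => hξ _), inCount_eq_sum η v S (fun k => hη _)]
    exact Finset.sum_congr rfl fun i _ => hN i v
  have hnm : n = m := by
    rw [len_eq_sum ξ S (fun k => hξ _), len_eq_sum η S (fun k => hη _)]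
    exact Finset.sum_congr rfl fun v _ => hout v
  refine ⟨hnm, ?_⟩
  have key : ∀ v : V, (ξ (Fin.last n) = v) ↔ (η (Fin.last m) = v) := by
    intro v
    have f1 := flow ξ v
    have f2 := flow η v
    have h0 : (if ξ 0 = v then 1 else 0) = (if η 0 = v then 1 else 0) := by
      rw [hstart]
    have := hout v
    have := hin v
    by_cases h1 : ξ (Fin.last n) = v <;> by_cases h2 : η (Fin.last m) = v <;>
      simp_all <;> omega
  exact (key (η (Fin.last m))).mpr rfl
end

section
/- Let H₁, Hₙ : [0,∞) → (0,∞) be differentiable with continuous derivatives, and let λ₁ₙ, λₙ₁ > 0. Suppose that for all r₁, s₁, r₂ ≥ 0, λ₁ₙ (Hₙ(r₂) − Hₙ(0)) (Ĥ₁(r₁+s₁) − Ĥ₁(r₁)) = λₙ₁ (H₁(r₁+s₁) − H₁(r₁)) (Ĥₙ(r₂) − Ĥₙ(0)), where Ĥᵢ is a primitive of 1/Hᵢ. Then for all r ≥ 0, λ₁ₙ (Hₙ²)'(0) = λₙ₁ (H₁²)'(r); in particular (H₁²)' is constant. -/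
open Set

theorem stmt4 (H₁ Hₙ Hhat₁ Hhatₙ : ℝ → ℝ) (lam₁ₙ lamₙ₁ : ℝ)
    (hlam1 : 0 < lam₁ₙ) (hlam2 : 0 < lamₙ₁)
    (hH₁pos : ∀ x, 0 ≤ x → 0 < H₁ x) (hHₙpos : ∀ x, 0 ≤ x → 0 < Hₙ x)
    (hH₁diff : ∀ x, 0 ≤ x → HasDerivWithinAt H₁ (deriv H₁ x) (Set.Ici 0) x)
    (hHₙdiff : ∀ x, 0 ≤ x → HasDerivWithinAt Hₙ (deriv Hₙ x) (Set.Ici 0) x)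
    (hH₁cont : ContinuousOn (deriv H₁) (Set.Ici 0))
    (hHₙcont : ContinuousOn (deriv Hₙ) (Set.Ici 0))
    (hHhat₁ : ∀ x, 0 ≤ x → HasDerivWithinAt Hhat₁ (1 / H₁ x) (Set.Ici 0) x)
    (hHhatₙ : ∀ x, 0 ≤ x → HasDerivWithinAt Hhatₙ (1 / Hₙ x) (Set.Ici 0) x)
    (hyp : ∀ r₁ s₁ r₂ : ℝ, 0 ≤ r₁ → 0 ≤ s₁ → 0 ≤ r₂ →
      lam₁ₙ * (Hₙ r₂ - Hₙ 0) * (Hhat₁ (r₁ + s₁) - Hhat₁ r₁)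
        = lamₙ₁ * (H₁ (r₁ + s₁) - H₁ r₁) * (Hhatₙ r₂ - Hhatₙ 0)) :
    ∀ r : ℝ, 0 ≤ r →
      lam₁ₙ * derivWithin (fun x => Hₙ x ^ 2) (Set.Ici 0) 0
        = lamₙ₁ * derivWithin (fun x => H₁ x ^ 2) (Set.Ici 0) r := by
  have h0 : (0:ℝ) ∈ Ici (0:ℝ) := self_mem_Ici
  have hu : UniqueDiffWithinAt ℝ (Ici (0:ℝ)) 0 := (uniqueDiffOn_Ici 0) 0 h0
  have hmaps : ∀ r₁ : ℝ, 0 ≤ r₁ → Set.MapsTo (fun s : ℝ => r₁ + s) (Ici 0) (Ici 0) := by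
    intro r₁ hr₁ s hs
    exact add_nonneg hr₁ hs
  have hinner : ∀ r₁ : ℝ, HasDerivWithinAt (fun s : ℝ => r₁ + s) 1 (Ici 0) 0 :=
    fun r₁ => (hasDerivWithinAt_id 0 (Ici 0)).const_add r₁
  -- Step 1: differentiate hyp in s₁ at 0
  have step1 : ∀ r₁ r₂ : ℝ, 0 ≤ r₁ → 0 ≤ r₂ →
      lam₁ₙ * (Hₙ r₂ - Hₙ 0) * (1 / H₁ r₁)
        = lamₙ₁ * deriv H₁ r₁ * (Hhatₙ r₂ - Hhatₙ 0) := by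
    intro r₁ r₂ hr₁ hr₂
    set f : ℝ → ℝ := fun s => lam₁ₙ * (Hₙ r₂ - Hₙ 0) * (Hhat₁ (r₁ + s) - Hhat₁ r₁) with hf
    set g : ℝ → ℝ := fun s => lamₙ₁ * (H₁ (r₁ + s) - H₁ r₁) * (Hhatₙ r₂ - Hhatₙ 0) with hg
    have hcomp1 : HasDerivWithinAt (fun s => Hhat₁ (r₁ + s)) (1 / H₁ r₁) (Ici 0) 0 := by
      have houter : HasDerivWithinAt Hhat₁ (1 / H₁ r₁) (Ici 0) ((fun s : ℝ => r₁ + s) 0) := by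
        simpa using hHhat₁ r₁ hr₁
      simpa [Function.comp_def] using houter.comp 0 (hinner r₁) (hmaps r₁ hr₁)
    have hcomp2 : HasDerivWithinAt (fun s => H₁ (r₁ + s)) (deriv H₁ r₁) (Ici 0) 0 := by
      have houter : HasDerivWithinAt H₁ (deriv H₁ r₁) (Ici 0) ((fun s : ℝ => r₁ + s) 0) := by
        simpa using hH₁diff r₁ hr₁
      simpa [Function.comp_def] using houter.comp 0 (hinner r₁) (hmaps r₁ hr₁)
    have hfd : HasDerivWithinAt f (lam₁ₙ * (Hₙ r₂ - Hₙ 0) * (1 / H₁ r₁)) (Ici 0) 0 :=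
      ((hcomp1.sub_const (Hhat₁ r₁)).const_mul (lam₁ₙ * (Hₙ r₂ - Hₙ 0)))
    have hgd : HasDerivWithinAt g (lamₙ₁ * deriv H₁ r₁ * (Hhatₙ r₂ - Hhatₙ 0)) (Ici 0) 0 := by
      have := ((hcomp2.sub_const (H₁ r₁)).const_mul lamₙ₁).mul_const (Hhatₙ r₂ - Hhatₙ 0)
      simpa [hg, mul_assoc] using this
    have heq : EqOn f g (Ici 0) := fun s hs => hyp r₁ s r₂ hr₁ hs hr₂
    have hfd' : HasDerivWithinAt f (lamₙ₁ * deriv H₁ r₁ * (Hhatₙ r₂ - Hhatₙ 0)) (Ici 0) 0 :=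
      hgd.congr heq (heq h0)
    have := hfd.derivWithin hu
    rw [hfd'.derivWithin hu] at this
    exact this.symm
  -- Step 2: differentiate step1 in r₂ at 0
  have step2 : ∀ r₁ : ℝ, 0 ≤ r₁ →
      lam₁ₙ * deriv Hₙ 0 * Hₙ 0 = lamₙ₁ * deriv H₁ r₁ * H₁ r₁ := by
    intro r₁ hr₁
    set F : ℝ → ℝ := fun t => lam₁ₙ * (Hₙ t - Hₙ 0) * (1 / H₁ r₁) with hF
    set G : ℝ → ℝ := fun t => lamₙ₁ * deriv H₁ r₁ * (Hhatₙ t - Hhatₙ 0) with hG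
    have hFd : HasDerivWithinAt F (lam₁ₙ * deriv Hₙ 0 * (1 / H₁ r₁)) (Ici 0) 0 := by
      have := (((hHₙdiff 0 le_rfl).sub_const (Hₙ 0)).const_mul lam₁ₙ).mul_const (1 / H₁ r₁)
      simpa [hF, mul_assoc] using this
    have hGd : HasDerivWithinAt G (lamₙ₁ * deriv H₁ r₁ * (1 / Hₙ 0)) (Ici 0) 0 :=
      ((hHhatₙ 0 le_rfl).sub_const (Hhatₙ 0)).const_mul (lamₙ₁ * deriv H₁ r₁)
    have heq : EqOn F G (Ici 0) := fun t ht => step1 r₁ t hr₁ ht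
    have hFd' : HasDerivWithinAt F (lamₙ₁ * deriv H₁ r₁ * (1 / Hₙ 0)) (Ici 0) 0 :=
      hGd.congr heq (heq h0)
    have key := hFd.derivWithin hu
    rw [hFd'.derivWithin hu] at key
    have h1 : H₁ r₁ ≠ 0 := (hH₁pos r₁ hr₁).ne'
    have h2 : Hₙ 0 ≠ 0 := (hHₙpos 0 le_rfl).ne'
    field_simp at key
    linarith [key]
  -- derivWithin of squares
  have hsqₙ : derivWithin (fun x => Hₙ x ^ 2) (Ici 0) 0 = 2 * Hₙ 0 * deriv Hₙ 0 := by
    have : HasDerivWithinAt (fun x => Hₙ x ^ 2)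
        ((2 : ℕ) * Hₙ 0 ^ 1 * deriv Hₙ 0) (Ici 0) 0 := (hHₙdiff 0 le_rfl).pow 2
    rw [this.derivWithin hu]; push_cast; ring
  intro r hr
  have hur : UniqueDiffWithinAt ℝ (Ici (0:ℝ)) r := (uniqueDiffOn_Ici 0) r hr
  have hsq₁ : derivWithin (fun x => H₁ x ^ 2) (Ici 0) r = 2 * H₁ r * deriv H₁ r := by
    have : HasDerivWithinAt (fun x => H₁ x ^ 2)
        ((2 : ℕ) * H₁ r ^ 1 * deriv H₁ r) (Ici 0) r := (hH₁diff r hr).pow 2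
    rw [this.derivWithin hur]; push_cast; ring
  rw [hsqₙ, hsq₁]
  have := step2 r hr
  ring_nf
  ring_nf at this
  linarith
end

section
/- Let (i₀,…,iₙ) be a finite path and s₁ < s₂ < … < sₙ < s positive reals; define local times S_i(u) = Σ_{k} (min(u, s_{k+1}) − s_k)·1_{i_k = i} (length of time the step path spends at i before time u, where s₀ = 0 and s_{n+1} = s). Then the telescoping product Π_{k=1}^{n} √(S_{i_k}(s_{k−1}) + 1) / √(S_{i_{k−1}}(s_k) + 1) equals Π_{i ≠ iₙ} 1/√(S_i(s) + 1), where the product on the right is over all states i visited by the path with i ≠ iₙ, and uses that S_{i_k}(s_{k−1}) records the local time of i_k at the moment of the k-th jump. -/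
noncomputable def locT {V : Type*} [DecidableEq V] (i : ℕ → V) (s : ℕ → ℝ) (n : ℕ) (v : V) (u : ℝ) : ℝ :=
  ∑ k ∈ Finset.range (n + 1), if i k = v then min u (s (k + 1)) - min u (s k) else 0

lemma smono {s : ℕ → ℝ} {N : ℕ} (h : ∀ k, k ≤ N → s k < s (k + 1)) :
    ∀ a b : ℕ, a ≤ b → b ≤ N + 1 → s a ≤ s b := by
  intro a b hab hbN
  induction b with
  | zero => exact Nat.le_zero.mp hab ▸ le_rfl
  | succ m ih =>
    rcases Nat.lt_or_ge a (m + 1) with h' | h'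
    · exact le_trans (ih (Nat.lt_succ_iff.mp h') (by omega)) (h m (by omega)).le
    · exact le_antisymm hab h' ▸ le_rfl

lemma locT_eval {V : Type*} [DecidableEq V] {i : ℕ → V} {s : ℕ → ℝ} {N n m : ℕ}
    (h : ∀ k, k ≤ N → s k < s (k + 1)) (hn : n ≤ N) (hm : m ≤ N + 1) (v : V) :
    locT i s n v (s m) =
      ∑ k ∈ Finset.range (min (n + 1) m), if i k = v then s (k + 1) - s k else 0 := by
  unfold locT
  have hsub : Finset.range (min (n + 1) m) ⊆ Finset.range (n + 1) :=
    Finset.range_subset_range.mpr (min_le_left _ _)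
  rw [← Finset.sum_subset hsub ?hz]
  · apply Finset.sum_congr rfl
    intro k hk
    simp only [Finset.mem_range, lt_min_iff] at hk
    have h1 : s (k + 1) ≤ s m := smono h (k + 1) m hk.2 hm
    have h2 : s k ≤ s m := le_trans (smono h k (k + 1) (by omega) (by omega)) h1
    rw [min_eq_right h1, min_eq_right h2]
  case hz =>
    intro k hk hk2
    simp only [Finset.mem_range, lt_min_iff, not_and_or, not_lt] at hk hk2
    have hmk : m ≤ k := by omega
    have h1 : s m ≤ s k := smono h m k hmk (by omega)
    have h2 : s m ≤ s (k + 1) := le_trans h1 (smono h k (k + 1) (by omega) (by omega))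
    rw [min_eq_left h2, min_eq_left h1]
    simp

lemma locT_nonneg {V : Type*} [DecidableEq V] {i : ℕ → V} {s : ℕ → ℝ} {N n m : ℕ}
    (h : ∀ k, k ≤ N → s k < s (k + 1)) (hn : n ≤ N) (hm : m ≤ N + 1) (v : V) :
    0 ≤ locT i s n v (s m) := by
  rw [locT_eval h hn hm]
  apply Finset.sum_nonneg
  intro k hk
  simp only [Finset.mem_range, lt_min_iff] at hk
  have : s k ≤ s (k + 1) := (h k (by omega)).le
  split <;> linarith

lemma key {V : Type*} [DecidableEq V] (i : ℕ → V) (s : ℕ → ℝ) :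
    ∀ n : ℕ, (∀ k, k ≤ n → s k < s (k + 1)) → (∀ k, k < n → i k ≠ i (k + 1)) →
    (∏ k ∈ Finset.Icc 1 n,
        Real.sqrt (locT i s n (i k) (s (k - 1)) + 1) /
          Real.sqrt (locT i s n (i (k - 1)) (s k) + 1))
      = ∏ v ∈ (Finset.image i (Finset.range (n + 1))).erase (i n),
          (Real.sqrt (locT i s n v (s (n + 1)) + 1))⁻¹ := by
  intro n
  induction n with
  | zero => intro _ _; simp
  | succ n ih =>
    intro hmono hjump
    have hm' : ∀ k, k ≤ n → s k < s (k + 1) := fun k hk => hmono k (by omega)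
    have hj' : ∀ k, k < n → i k ≠ i (k + 1) := fun k hk => hjump k (by omega)
    set A := Finset.image i (Finset.range (n + 1)) with hA
    set f : V → ℝ := fun v => (Real.sqrt (locT i s n v (s (n + 1)) + 1))⁻¹ with hf
    -- agreement at times ≤ s (n+1)
    have ha : ∀ (v : V) (m : ℕ), m ≤ n + 1 → locT i s (n + 1) v (s m) = locT i s n v (s m) := by
      intro v m hm
      rw [locT_eval hmono le_rfl (by omega), locT_eval hm' le_rfl (by omega),
        min_eq_right (by omega : m ≤ n + 1 + 1), min_eq_right (by omega : m ≤ n + 1)]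
    have hb : ∀ v : V, locT i s (n + 1) v (s (n + 1 + 1)) =
        locT i s n v (s (n + 1)) + (if i (n + 1) = v then s (n + 1 + 1) - s (n + 1) else 0) := by
      intro v
      rw [locT_eval hmono le_rfl (by omega), locT_eval hm' le_rfl (by omega),
        min_self, min_self, Finset.sum_range_succ]
    have hc : locT i s n (i (n + 1)) (s n) = locT i s n (i (n + 1)) (s (n + 1)) := by
      rw [locT_eval hm' le_rfl (by omega), locT_eval hm' le_rfl (by omega),
        min_eq_right (by omega : n ≤ n + 1), min_self, Finset.sum_range_succ,
        if_neg (hjump n (by omega)), add_zero]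
    have hpos : ∀ v : V, 0 < Real.sqrt (locT i s n v (s (n + 1)) + 1) := by
      intro v
      have := locT_nonneg hm' le_rfl (by omega : n + 1 ≤ n + 1) v (i := i)
      exact Real.sqrt_pos.mpr (by linarith)
    have he : i (n + 1) ∉ A → locT i s n (i (n + 1)) (s (n + 1)) = 0 := by
      intro hni
      rw [locT_eval hm' le_rfl (by omega), min_self]
      apply Finset.sum_eq_zero
      intro k hk
      rw [if_neg]
      intro hcontr
      exact hni (Finset.mem_image.mpr ⟨k, hk, hcontr⟩)
    rw [Finset.prod_Icc_succ_top (by omega : 1 ≤ n + 1)]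
    have hprod : (∏ k ∈ Finset.Icc 1 n,
        Real.sqrt (locT i s (n + 1) (i k) (s (k - 1)) + 1) /
          Real.sqrt (locT i s (n + 1) (i (k - 1)) (s k) + 1))
        = ∏ k ∈ Finset.Icc 1 n,
        Real.sqrt (locT i s n (i k) (s (k - 1)) + 1) /
          Real.sqrt (locT i s n (i (k - 1)) (s k) + 1) := by
      apply Finset.prod_congr rfl
      intro k hk
      simp only [Finset.mem_Icc] at hk
      rw [ha _ _ (by omega), ha _ _ (by omega)]
    rw [hprod, ih hm' hj']
    have himg : Finset.image i (Finset.range (n + 1 + 1)) = insert (i (n + 1)) A := by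
      rw [Finset.range_add_one, Finset.image_insert]
    rw [himg]
    have herase : (insert (i (n + 1)) A).erase (i (n + 1)) = A.erase (i (n + 1)) := by
      ext x
      simp only [Finset.mem_erase, Finset.mem_insert]
      tauto
    rw [herase]
    have hRHS : (∏ v ∈ A.erase (i (n + 1)),
        (Real.sqrt (locT i s (n + 1) v (s (n + 1 + 1)) + 1))⁻¹) = ∏ v ∈ A.erase (i (n + 1)), f v := by
      apply Finset.prod_congr rfl
      intro v hv
      have hvne : i (n + 1) ≠ v := fun h => (Finset.mem_erase.mp hv).1 h.symm
      rw [hb v, if_neg hvne, add_zero]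
    rw [hRHS]
    -- now handle the top factor
    simp only [Nat.add_sub_cancel]
    rw [ha (i (n + 1)) n (by omega), ha (i n) (n + 1) le_rfl, hc]
    have hAn : i n ∈ A := Finset.mem_image.mpr ⟨n, Finset.mem_range.mpr (by omega), rfl⟩
    have h1 : f (i n) * ∏ v ∈ A.erase (i n), f v = ∏ v ∈ A, f v :=
      Finset.mul_prod_erase A f hAn
    have hstep : (∏ v ∈ A.erase (i n), f v) *
        (Real.sqrt (locT i s n (i (n + 1)) (s (n + 1)) + 1) /
          Real.sqrt (locT i s n (i n) (s (n + 1)) + 1))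
        = Real.sqrt (locT i s n (i (n + 1)) (s (n + 1)) + 1) * ∏ v ∈ A, f v := by
      rw [← h1]
      simp only [hf, div_eq_mul_inv]
      ring
    rw [hstep]
    by_cases hni : i (n + 1) ∈ A
    · have h2 : f (i (n + 1)) * ∏ v ∈ A.erase (i (n + 1)), f v = ∏ v ∈ A, f v :=
        Finset.mul_prod_erase A f hni
      rw [← h2, ← mul_assoc]
      rw [show Real.sqrt (locT i s n (i (n + 1)) (s (n + 1)) + 1) * f (i (n + 1)) = 1 from
        mul_inv_cancel₀ (ne_of_gt (hpos (i (n + 1)))), one_mul]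
    · rw [Finset.erase_eq_of_notMem hni, he hni]
      simp
  
theorem stmt8 {V : Type*} [DecidableEq V] (n : ℕ) (i : ℕ → V) (s : ℕ → ℝ) (T : ℝ)
    (hs0 : s 0 = 0) (hsT : s (n + 1) = T)
    (hmono : ∀ k, k ≤ n → s k < s (k + 1))
    (hjump : ∀ k, k < n → i k ≠ i (k + 1))
    -- local time of the step path at vertex `v` up to time `u`
    (S : V → ℝ → ℝ)
    (hS : ∀ v u, S v u =
      ∑ k ∈ Finset.range (n + 1),
        if i k = v then min u (s (k + 1)) - min u (s k) else 0) :
    (∏ k ∈ Finset.Icc 1 n,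
        Real.sqrt (S (i k) (s (k - 1)) + 1) / Real.sqrt (S (i (k - 1)) (s k) + 1))
      = ∏ v ∈ (Finset.image i (Finset.range (n + 1))).erase (i n),
          (Real.sqrt (S v T + 1))⁻¹ := by
  subst hsT
  have h := key i s n hmono hjump
  simp only [locT] at h
  simp only [hS]
  exact h
end

section
/- The density of a trajectory of the time-changed VRJP, d_σ = (1/2)ⁿ Π_{k=1}^n W_{i_{k−1},i_k} · Π_{i ≠ iₙ} (S_i(s)+1)^{−1/2} · exp(−Σ_{i∼j} (W_{i,j}/2)(√((S_i(s)+1)(S_j(s)+1)) − 1)), depends only on the transition counts N_{i,j}(σ), the final state iₙ, and the final local times (S_i(s))_{i∈V}. Consequently, if two trajectories σ, τ of the same duration s satisfy N_{i,j}(σ) = N_{i,j}(τ) for all i,j, have the same initial state, and S_i^σ(s) = S_i^τ(s) for all i, then d_σ = d_τ. -/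
/-- Density of a VRJP trajectory with `n` jumps along `ξ` and final local times `S`. -/
noncomputable def vrjpDensity {V : Type*} [Fintype V] [DecidableEq V]
    (Adj : V → V → Prop) [DecidableRel Adj] (W : V → V → ℝ)
    {n : ℕ} (ξ : Fin (n + 1) → V) (S : V → ℝ) : ℝ :=
  (1 / 2) ^ n * (∏ k : Fin n, W (ξ k.castSucc) (ξ k.succ))
    * (∏ v ∈ Finset.univ.erase (ξ (Fin.last n)), (Real.sqrt (S v + 1))⁻¹)
    * Real.exp (-((∑ p : V, ∑ q : V,
        if Adj p q then (W p q / 2) * (Real.sqrt ((S p + 1) * (S q + 1)) - 1) else 0) / 2))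

section Aux

variable {V : Type*} [Fintype V] [DecidableEq V] {n : ℕ}

/-- The total number of transitions equals the number of jumps. -/
lemma transCount_total (ξ : Fin (n + 1) → V) :
    ∑ i : V, ∑ j : V, transCount ξ i j = n := by
  have h := Finset.card_eq_sum_card_fiberwise (s := (Finset.univ : Finset (Fin n)))
    (t := Finset.univ ×ˢ Finset.univ)
    (f := fun k => (ξ k.castSucc, ξ k.succ)) (by simp)
  simp only [Finset.card_univ, Fintype.card_fin, Finset.sum_product] at h
  refine Eq.trans ?_ h.symm
  refine Finset.sum_congr rfl fun i _ => Finset.sum_congr rfl fun j _ => ?_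
  rw [transCount]; congr 1; ext k; simp [Prod.ext_iff]

/-- The product of edge weights along the trajectory factors through transition counts. -/
lemma prod_weights (ξ : Fin (n + 1) → V) (W : V → V → ℝ) :
    ∏ k : Fin n, W (ξ k.castSucc) (ξ k.succ) = ∏ i : V, ∏ j : V, W i j ^ transCount ξ i j := by
  have h := Finset.prod_fiberwise_of_maps_to (s := (Finset.univ : Finset (Fin n)))
    (t := Finset.univ ×ˢ Finset.univ)
    (g := fun k => (ξ k.castSucc, ξ k.succ)) (by simp)
    (f := fun k => W (ξ k.castSucc) (ξ k.succ))
  rw [← h, Finset.prod_product]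
  refine Finset.prod_congr rfl fun i _ => Finset.prod_congr rfl fun j _ => ?_
  rw [transCount, ← Finset.prod_const]
  refine Finset.prod_congr (by ext k; simp [Prod.ext_iff]) fun k hk => ?_
  simp only [Finset.mem_filter] at hk
  rw [hk.2.1, hk.2.2]

lemma sum_out (ξ : Fin (n + 1) → V) (v : V) :
    ∑ i : V, transCount ξ v i = ∑ k : Fin n, if ξ k.castSucc = v then 1 else 0 := by
  simp only [transCount, Finset.card_filter]
  rw [Finset.sum_comm]
  refine Finset.sum_congr rfl fun k _ => ?_
  by_cases h : ξ k.castSucc = v <;> simp [h, Finset.sum_ite_eq']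

lemma sum_in (ξ : Fin (n + 1) → V) (v : V) :
    ∑ i : V, transCount ξ i v = ∑ k : Fin n, if ξ k.succ = v then 1 else 0 := by
  simp only [transCount, Finset.card_filter]
  rw [Finset.sum_comm]
  refine Finset.sum_congr rfl fun k _ => ?_
  by_cases h : ξ k.succ = v <;> simp [h, Finset.sum_ite_eq']

/-- Outflow/inflow balance: out-count plus terminal indicator equals in-count plus initial
indicator, for every vertex `v`. -/
lemma count_balance (ξ : Fin (n + 1) → V) (v : V) :
    (∑ i : V, transCount ξ v i) + (if ξ (Fin.last n) = v then 1 else 0)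
    = (∑ i : V, transCount ξ i v) + (if ξ 0 = v then 1 else 0) := by
  rw [sum_out, sum_in]
  have h1 := Fin.sum_univ_castSucc (f := fun k : Fin (n+1) => if ξ k = v then 1 else 0)
  have h2 := Fin.sum_univ_succ (f := fun k : Fin (n+1) => if ξ k = v then 1 else 0)
  omega

end Aux

theorem stmt10 {V : Type*} [Fintype V] [DecidableEq V]
    (G : SimpleGraph V) [DecidableRel G.Adj]
    (W : V → V → ℝ)
    (hWpos : ∀ i j, G.Adj i j → 0 < W i j)
    (hWsymm : ∀ i j, W i j = W j i)
    {n m : ℕ} (ξ : Fin (n + 1) → V) (η : Fin (m + 1) → V)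
    (Sσ Sτ : V → ℝ)
    (hN : ∀ i j : V, transCount ξ i j = transCount η i j)
    (hstart : ξ 0 = η 0)
    (hS : ∀ v : V, Sσ v = Sτ v) :
    vrjpDensity G.Adj W ξ Sσ = vrjpDensity G.Adj W η Sτ := by
  have hSS : Sσ = Sτ := funext hS
  subst hSS
  have hnm : n = m := by
    rw [← transCount_total ξ, ← transCount_total η]
    exact Finset.sum_congr rfl fun i _ => Finset.sum_congr rfl fun j _ => hN i j
  subst hnm
  have hlast : ξ (Fin.last n) = η (Fin.last n) := by
    set v := ξ (Fin.last n) with hv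
    have h1 := count_balance ξ v
    have h2 := count_balance η v
    have e1 : ∑ i : V, transCount ξ v i = ∑ i : V, transCount η v i :=
      Finset.sum_congr rfl fun i _ => hN v i
    have e2 : ∑ i : V, transCount ξ i v = ∑ i : V, transCount η i v :=
      Finset.sum_congr rfl fun i _ => hN i v
    rw [hstart, e1, e2, if_pos rfl] at h1
    by_cases hb : η (Fin.last n) = v
    · exact hb.symm
    · rw [if_neg hb] at h2
      omega
  have hprod : (∏ k : Fin n, W (ξ k.castSucc) (ξ k.succ))
      = ∏ k : Fin n, W (η k.castSucc) (η k.succ) := by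
    rw [prod_weights, prod_weights]
    exact Finset.prod_congr rfl fun i _ => Finset.prod_congr rfl fun j _ => by rw [hN]
  unfold vrjpDensity
  rw [hprod, hlast]
end

section
/- Let (f_{i,j}) be continuous positive jump-rate functions on a strongly connected graph G and suppose there exist C¹ diffeomorphisms h_i of [0,∞) with h_i(0)=0 such that: (a) for each adjacent pair i ∼ j there is λ_{i,j} > 0 with f_{i,j}(x) = λ_{i,j} h_j'(x) for all x ≥ 0, and (b) for H_i = h_i' ∘ h_i^{-1}, each (H_i²)' is constant equal to A_i > 0, with λ_{i,j} A_j = λ_{j,i} A_i for i ∼ j. Then, setting B_i = H_i(0)² and W_{i,j} = λ_{i,j} A_j / 2, there exist constants D_j > 0 such that f_{i,j}(x) = W_{i,j} x + D_{i,j} with D_{i,j} = λ_{i,j}√B_j, i.e. each jump rate is an affine increasing function of the target's local time, and W_{i,j} = W_{j,i}. -/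
private lemma affine_aux (F : ℝ → ℝ) (c : ℝ)
    (hF : ∀ s, 0 ≤ s → HasDerivWithinAt F c (Set.Ici 0) s) :
    ∀ s, 0 ≤ s → F s = F 0 + c * s := by
  intro s hs
  have hG' : ∀ x ∈ Set.Ico (0:ℝ) s,
      HasDerivWithinAt (fun u => F u - c * u) 0 (Set.Ici x) x := by
    intro x hx
    have h1 : HasDerivWithinAt (fun u => F u - c * u) (c - c) (Set.Ici 0) x :=
      (hF x hx.1).sub (((hasDerivWithinAt_id x _).const_mul c).congr_deriv (by ring))
    simpa using h1.mono (Set.Ici_subset_Ici.2 hx.1)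
  have hcont : ContinuousOn (fun u => F u - c * u) (Set.Icc 0 s) := by
    intro x hx
    exact (((hF x hx.1).sub
      (((hasDerivWithinAt_id x _).const_mul c).congr_deriv (by ring))).continuousWithinAt).mono
      (fun y hy => hy.1)
  have := constant_of_has_deriv_right_zero hcont hG' s (by exact ⟨hs, le_rfl⟩)
  linarith


theorem stmt15 {V : Type*} (G : SimpleGraph V)
    -- strongly connected: every edge lies in a cycle
    (hstrong : ∀ i j, G.Adj i j → ∃ w : G.Walk i i, w.IsCycle ∧ s(i, j) ∈ w.edges)
    (f : V → V → ℝ → ℝ)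
    (hfcont : ∀ i j, G.Adj i j → ContinuousOn (f i j) (Set.Ici 0))
    (hfpos : ∀ i j, G.Adj i j → ∀ x, 0 ≤ x → 0 < f i j x)
    -- the C¹ diffeomorphisms `h i` of `[0,∞)` with inverses `hinv i`
    (h hinv : V → ℝ → ℝ)
    (hh0 : ∀ i, h i 0 = 0)
    (hhmono : ∀ i, StrictMonoOn (h i) (Set.Ici 0))
    (hhbij : ∀ i, Set.BijOn (h i) (Set.Ici 0) (Set.Ici 0))
    (hhdiff : ∀ i x, 0 ≤ x → HasDerivWithinAt (h i) (deriv (h i) x) (Set.Ici 0) x)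
    (hhderivcont : ∀ i, ContinuousOn (deriv (h i)) (Set.Ici 0))
    (hhderivpos : ∀ i x, 0 ≤ x → 0 < deriv (h i) x)
    (hinv_left : ∀ i x, 0 ≤ x → hinv i (h i x) = x)
    (hinv_right : ∀ i s, 0 ≤ s → h i (hinv i s) = s)
    -- (a)  f_{i,j} = λ_{i,j} h_j'
    (lam : V → V → ℝ)
    (hlampos : ∀ i j, G.Adj i j → 0 < lam i j)
    (ha : ∀ i j, G.Adj i j → ∀ x, 0 ≤ x → f i j x = lam i j * deriv (h j) x)
    -- (b)  (H_i²)' ≡ A_i > 0 for H_i = h_i' ∘ h_i⁻¹, with λ_{i,j} A_j = λ_{j,i} A_i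
    (A : V → ℝ)
    (hApos : ∀ i, 0 < A i)
    (hb : ∀ i s, 0 ≤ s →
      HasDerivWithinAt (fun u => (deriv (h i) (hinv i u)) ^ 2) (A i) (Set.Ici 0) s)
    (hrev : ∀ i j, G.Adj i j → lam i j * A j = lam j i * A i) :
    ∀ i j, G.Adj i j →
      (0 < lam i j * Real.sqrt ((deriv (h j) (hinv j 0)) ^ 2)) ∧
      (∀ x, 0 ≤ x →
        f i j x = (lam i j * A j / 2) * x
          + lam i j * Real.sqrt ((deriv (h j) (hinv j 0)) ^ 2)) ∧
      lam i j * A j / 2 = lam j i * A i / 2 := by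
  intro i j hij
  have hlam := hlampos i j hij
  have hinv0 : hinv j 0 = 0 := by
    have := hinv_left j 0 le_rfl
    rwa [hh0 j] at this
  set g : ℝ → ℝ := fun s => (deriv (h j) (hinv j s)) ^ 2 with hgdef
  have hgaff : ∀ s, 0 ≤ s → g s = g 0 + A j * s := affine_aux g (A j) (hb j)
  have hphi0 : 0 < deriv (h j) 0 := hhderivpos j 0 le_rfl
  have hg0 : g 0 = (deriv (h j) 0) ^ 2 := by simp [hgdef, hinv0]
  have hsq : Real.sqrt ((deriv (h j) (hinv j 0)) ^ 2) = deriv (h j) 0 := by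
    rw [hinv0, Real.sqrt_sq hphi0.le]
  set F : ℝ → ℝ := fun x => g 0 + A j * h j x with hFdef
  have hFval : ∀ x, 0 ≤ x → F x = (deriv (h j) x) ^ 2 := by
    intro x hx
    have hx' : (0:ℝ) ≤ h j x := (hhbij j).mapsTo hx
    have h1 : g (h j x) = g 0 + A j * h j x := hgaff _ hx'
    have h2 : g (h j x) = (deriv (h j) x) ^ 2 := by
      simp [hgdef, hinv_left j x hx]
    rw [hFdef]
    simp only
    rw [← h1, h2]
  have key : ∀ x, 0 ≤ x → deriv (h j) x = (A j / 2) * x + deriv (h j) 0 := by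
    have hsder : ∀ x, 0 ≤ x →
        HasDerivWithinAt (fun u => Real.sqrt (F u)) (A j / 2) (Set.Ici 0) x := by
      intro x hx
      have hdx : 0 < deriv (h j) x := hhderivpos j x hx
      have hFpos : 0 < F x := by rw [hFval x hx]; positivity
      have hF' : HasDerivWithinAt F (A j * deriv (h j) x) (Set.Ici 0) x :=
        ((hhdiff j x hx).const_mul (A j)).const_add (g 0)
      have hs' := (Real.hasDerivAt_sqrt (ne_of_gt hFpos)).comp_hasDerivWithinAt x hF'
      have hval : 1 / (2 * Real.sqrt (F x)) * (A j * deriv (h j) x) = A j / 2 := by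
        rw [hFval x hx, Real.sqrt_sq hdx.le]
        field_simp
      rw [hval] at hs'
      exact hs'
    intro x hx
    have := affine_aux _ (A j / 2) hsder x hx
    rw [hFval x hx, Real.sqrt_sq (hhderivpos j x hx).le] at this
    have h0 : Real.sqrt (F 0) = deriv (h j) 0 := by
      rw [hFval 0 le_rfl, Real.sqrt_sq hphi0.le]
    rw [h0] at this
    linarith
  refine ⟨?_, ?_, ?_⟩
  · rw [hsq]; positivity
  · intro x hx
    rw [ha i j hij x hx, key x hx, hsq]; ring
  · rw [hrev i j hij]
end
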